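/- arXiv:0803.3713 — 5 statements merged into one kernel-verified Lean document; each statement's English description precedes it below -/
import Mathlib

section
/- Let Y be a real inner product space, let v, g ∈ Y, and let r ≥ 0 be a real number. If ⟨v, g⟩ > r, then v ≠ 0 and the function φ : ℝ → ℝ defined by φ(α) = r·|α| + (1/2)‖α·v − g‖² has a unique global minimizer, given by α* = (⟨v, g⟩ − r)/‖v‖²; that is, φ(α*) ≤ φ(α) for all α ∈ ℝ, with equality only when α = α*. -/
open RealInnerProductSpace

/-- The objective `φ(α) = r·|α| + (1/2)‖α·v − g‖²` restricted to a line. -/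
noncomputable def phi {Y : Type*} [NormedAddCommGroup Y] [InnerProductSpace ℝ Y]
    (r : ℝ) (v g : Y) (α : ℝ) : ℝ :=
  r * |α| + (1 / 2) * ‖α • v - g‖ ^ 2

/-- First case of Lemma 1: if `⟪v,g⟫ > r ≥ 0`, then `v ≠ 0` and
`α* = (⟪v,g⟫ − r)/‖v‖²` is the unique global minimizer of `φ`. -/
theorem stmt0 {Y : Type*} [NormedAddCommGroup Y] [InnerProductSpace ℝ Y]
    (v g : Y) (r : ℝ) (hr : 0 ≤ r) (h : ⟪v, g⟫ > r) :
    v ≠ 0 ∧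
      ∀ α : ℝ,
        phi r v g ((⟪v, g⟫ - r) / ‖v‖ ^ 2) ≤ phi r v g α ∧
        (phi r v g ((⟪v, g⟫ - r) / ‖v‖ ^ 2) = phi r v g α →
          α = (⟪v, g⟫ - r) / ‖v‖ ^ 2) := by
  have hv : v ≠ 0 := by
    rintro rfl
    simp only [inner_zero_left] at h
    linarith
  have hK : 0 < ‖v‖ ^ 2 := pow_pos (norm_pos_iff.mpr hv) 2
  set c := ⟪v, g⟫ with hc
  set A := (c - r) / ‖v‖ ^ 2 with hA
  have hA0 : 0 < A := div_pos (by linarith) hK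
  have hKA : ‖v‖ ^ 2 * A = c - r := by
    rw [hA]; field_simp
  have hexp : ∀ α : ℝ,
      phi r v g α = r * |α| + (1/2) * (α^2 * ‖v‖^2 - 2 * α * c + ‖g‖^2) := by
    intro α
    have h1 : ‖α • v - g‖ ^ 2 = ‖α • v‖^2 - 2 * ⟪α • v, g⟫ + ‖g‖^2 :=
      norm_sub_sq_real _ _
    have h2 : ⟪α • v, g⟫ = α * c := real_inner_smul_left _ _ _
    have h3 : ‖α • v‖^2 = α^2 * ‖v‖^2 := by
      rw [norm_smul]; simp [mul_pow, sq_abs]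
    rw [phi, h1, h2, h3]; ring
  refine ⟨hv, fun α => ?_⟩
  have key : phi r v g α =
      phi r v g A + (‖v‖^2 / 2) * (α - A)^2 + r * (|α| - α) := by
    rw [hexp α, hexp A, abs_of_pos hA0]
    nlinarith [hKA]
  have habs : 0 ≤ |α| - α := by linarith [le_abs_self α]
  have hterm : 0 ≤ r * (|α| - α) := mul_nonneg hr habs
  constructor
  · nlinarith [sq_nonneg (α - A)]
  · intro heq
    have hsq : (α - A)^2 = 0 := by nlinarith [sq_nonneg (α - A)]
    have := pow_eq_zero_iff (n := 2) (by norm_num) |>.mp hsq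
    linarith [sub_eq_zero.mp this]
end

section
/- Let Y be a real inner product space, let v, g ∈ Y, and let r ≥ 0 be a real number with v ≠ 0 or r > 0. If |⟨v, g⟩| ≤ r, then α = 0 is the unique global minimizer on ℝ of the function φ(α) = r·|α| + (1/2)‖α·v − g‖²; that is, φ(0) ≤ φ(α) for all α ∈ ℝ, with equality only when α = 0. -/
open RealInnerProductSpace

/-- Second case of Lemma 1: if `v ≠ 0` or `r > 0`, and `|⟪v,g⟫| ≤ r`, then `α = 0`
is the unique global minimizer of `φ`. -/
theorem stmt1 {Y : Type*} [NormedAddCommGroup Y] [InnerProductSpace ℝ Y]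
    (v g : Y) (r : ℝ) (hr : 0 ≤ r) (hvr : v ≠ 0 ∨ 0 < r) (h : |⟪v, g⟫| ≤ r) :
    ∀ α : ℝ, phi r v g 0 ≤ phi r v g α ∧ (phi r v g 0 = phi r v g α → α = 0) := by
  intro α
  have key : phi r v g α - phi r v g 0
      = (r * |α| - α * ⟪v, g⟫) + α ^ 2 * ‖v‖ ^ 2 / 2 := by
    simp only [phi, norm_sub_sq_real, real_inner_smul_left, norm_smul]
    simp [abs_zero, mul_pow, sq_abs]
    ring
  have h1 : α * ⟪v, g⟫ ≤ r * |α| := by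
    calc α * ⟪v, g⟫ ≤ |α * ⟪v, g⟫| := le_abs_self _
      _ = |α| * |⟪v, g⟫| := abs_mul _ _
      _ ≤ |α| * r := by gcongr
      _ = r * |α| := mul_comm _ _
  have h2 : 0 ≤ α ^ 2 * ‖v‖ ^ 2 / 2 := by positivity
  constructor
  · nlinarith [key]
  · intro heq
    have hz : (r * |α| - α * ⟪v, g⟫) + α ^ 2 * ‖v‖ ^ 2 / 2 = 0 := by
      rw [← key]; linarith
    have hsq : α ^ 2 * ‖v‖ ^ 2 = 0 := by nlinarith
    by_cases hv : v = 0
    · have hrpos : 0 < r := hvr.resolve_left (by simp [hv])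
      have : α * ⟪v, g⟫ = 0 := by simp [hv]
      have : r * |α| = 0 := by linarith [hz, hsq]
      have : |α| = 0 := by
        rcases mul_eq_zero.mp this with h' | h'
        · exact absurd h' (ne_of_gt hrpos)
        · exact h'
      exact abs_eq_zero.mp this
    · have hvn : ‖v‖ ^ 2 ≠ 0 := pow_ne_zero _ (norm_ne_zero_iff.mpr hv)
      have : α ^ 2 = 0 := by
        rcases mul_eq_zero.mp hsq with h' | h'
        · exact h'
        · exact absurd h' hvn
      exact pow_eq_zero_iff (by norm_num) |>.mp this
end

section
/- Let Y be a real inner product space, let v, g ∈ Y, and let r ≥ 0 be a real number. If ⟨v, g⟩ < −r, then v ≠ 0 and the function φ : ℝ → ℝ defined by φ(α) = r·|α| + (1/2)‖α·v − g‖² has a unique global minimizer, given by α* = (⟨v, g⟩ + r)/‖v‖²; that is, φ(α*) ≤ φ(α) for all α ∈ ℝ, with equality only when α = α*. -/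
open RealInnerProductSpace

lemma phi_eq {Y : Type*} [NormedAddCommGroup Y] [InnerProductSpace ℝ Y]
    (r : ℝ) (v g : Y) (α : ℝ) :
    phi r v g α = r * |α| + (1/2) * (α^2 * ‖v‖^2 - 2 * α * ⟪v, g⟫ + ‖g‖^2) := by
  have : ‖α • v - g‖^2 = ‖α • v‖^2 - 2 * ⟪α • v, g⟫ + ‖g‖^2 := by
    rw [@norm_sub_sq_real]
  rw [phi, this, real_inner_smul_left, norm_smul]
  simp [mul_pow, sq_abs]
  ring

/-- Third case of Lemma 1: if `⟪v,g⟫ < −r` with `r ≥ 0`, then `v ≠ 0` and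
`α* = (⟪v,g⟫ + r)/‖v‖²` is the unique global minimizer of `φ`. -/
theorem stmt2 {Y : Type*} [NormedAddCommGroup Y] [InnerProductSpace ℝ Y]
    (v g : Y) (r : ℝ) (hr : 0 ≤ r) (h : ⟪v, g⟫ < -r) :
    v ≠ 0 ∧
      ∀ α : ℝ,
        phi r v g ((⟪v, g⟫ + r) / ‖v‖ ^ 2) ≤ phi r v g α ∧
        (phi r v g ((⟪v, g⟫ + r) / ‖v‖ ^ 2) = phi r v g α →
          α = (⟪v, g⟫ + r) / ‖v‖ ^ 2) := by
  have hv : v ≠ 0 := by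
    intro hv0
    rw [hv0, inner_zero_left] at h
    linarith
  have hn : (0:ℝ) < ‖v‖^2 := pow_pos (norm_pos_iff.mpr hv) 2
  set s : ℝ := ⟪v, g⟫ with hs
  set β : ℝ := (s + r) / ‖v‖^2 with hβ
  have hβneg : β < 0 := div_neg_of_neg_of_pos (by linarith) hn
  have hβval : ‖v‖^2 * β = s + r := by
    rw [hβ, mul_div_cancel₀ _ (ne_of_gt hn)]
  have habsβ : |β| = -β := abs_of_neg hβneg
  have key : ∀ α : ℝ, phi r v g α - phi r v g β
      = (1/2) * ‖v‖^2 * (α - β)^2 + r * (|α| + α) := by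
    intro α
    rw [phi_eq, phi_eq, habsβ]
    have h1 : |α| = |α| := rfl
    nlinarith [hβval, abs_nonneg α, sq_nonneg (α - β)]
  refine ⟨hv, fun α => ?_⟩
  have h1 : 0 ≤ (1/2) * ‖v‖^2 * (α - β)^2 := by positivity
  have h2 : 0 ≤ r * (|α| + α) := by
    apply mul_nonneg hr
    have := neg_abs_le α
    linarith
  constructor
  · have := key α
    linarith
  · intro heq
    have hz : (1/2) * ‖v‖^2 * (α - β)^2 = 0 := by
      have := key α
      linarith
    have hsq : (α - β)^2 = 0 := by nlinarith [sq_nonneg (α - β)]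
    have := pow_eq_zero_iff (n := 2) (by norm_num) |>.mp hsq
    linarith
end

section
/- Let Y be a real inner product space, let v, g ∈ Y with v ≠ 0, let r ≥ 0, and let α* be the unique global minimizer of φ(α) = r·|α| + (1/2)‖α·v − g‖². Then for every real c ≥ 0: |α*| > c if and only if |⟨v, g⟩| > r + c·‖v‖². -/
open RealInnerProductSpace

lemma key_pos (n t r A G α : ℝ) (hn : 0 < n) (hr : 0 ≤ r) (hA : A * n = t - r)
    (hApos : 0 ≤ A) :
    r * |A| + (1/2) * (A^2 * n - 2 * A * t + G) ≤ r * |α| + (1/2) * (α^2 * n - 2 * α * t + G) := by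
  have hteq : t = A * n + r := by linarith
  subst hteq
  rw [abs_of_nonneg hApos]
  nlinarith [mul_nonneg hn.le (sq_nonneg (α - A)),
    mul_nonneg hr (sub_nonneg.mpr (le_abs_self α))]

lemma key_neg (n t r A G α : ℝ) (hn : 0 < n) (hr : 0 ≤ r) (hA : A * n = t + r)
    (hAneg : A ≤ 0) :
    r * |A| + (1/2) * (A^2 * n - 2 * A * t + G) ≤ r * |α| + (1/2) * (α^2 * n - 2 * α * t + G) := by
  have hteq : t = A * n - r := by linarith
  subst hteq
  rw [abs_of_nonpos hAneg]
  nlinarith [mul_nonneg hn.le (sq_nonneg (α - A)),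
    mul_nonneg hr (sub_nonneg.mpr (neg_abs_le α))]

lemma key_zero (n t r G α : ℝ) (hn : 0 < n) (habs : |t| ≤ r) :
    r * |0| + (1/2) * ((0:ℝ)^2 * n - 2 * 0 * t + G) ≤ r * |α| + (1/2) * (α^2 * n - 2 * α * t + G) := by
  have h2 : t * α ≤ r * |α| :=
    calc t * α ≤ |t * α| := le_abs_self _
    _ = |t| * |α| := abs_mul _ _
    _ ≤ r * |α| := mul_le_mul_of_nonneg_right habs (abs_nonneg _)
  simp only [abs_zero]
  nlinarith [mul_nonneg hn.le (sq_nonneg α)]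

/-- If `v ≠ 0`, `r ≥ 0` and `α*` is the unique global minimizer of `φ`, then for every
`c ≥ 0`: `|α*| > c ↔ |⟪v, g⟫| > r + c·‖v‖²`. -/
theorem stmt4 {Y : Type*} [NormedAddCommGroup Y] [InnerProductSpace ℝ Y]
    (v g : Y) (r : ℝ) (hv : v ≠ 0) (hr : 0 ≤ r) (αstar : ℝ)
    (hmin : ∀ α : ℝ, phi r v g αstar ≤ phi r v g α)
    (huniq : ∀ β : ℝ, (∀ α : ℝ, phi r v g β ≤ phi r v g α) → β = αstar) :
    ∀ c : ℝ, 0 ≤ c → (c < |αstar| ↔ r + c * ‖v‖ ^ 2 < |⟪v, g⟫|) := by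
  intro c hc
  have hn : 0 < ‖v‖ ^ 2 := pow_pos (norm_pos_iff.mpr hv) 2
  have hne : ‖v‖ ^ 2 ≠ 0 := ne_of_gt hn
  rcases lt_or_ge r ⟪v, g⟫ with h1 | h1
  · -- inner > r : αstar = (⟪v,g⟫ - r)/‖v‖²
    have ha : (⟪v, g⟫ - r) / ‖v‖ ^ 2 = αstar := by
      apply huniq
      intro α
      rw [phi_eq, phi_eq]
      exact key_pos _ _ _ _ _ _ hn hr (div_mul_cancel₀ _ hne)
        (le_of_lt (div_pos (by linarith) hn))
    have hs : 0 < αstar := by rw [← ha]; exact div_pos (by linarith) hn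
    rw [abs_of_pos hs, ← ha, abs_of_pos (by linarith : (0:ℝ) < ⟪v, g⟫), lt_div_iff₀ hn]
    constructor <;> intro <;> nlinarith
  · rcases lt_or_ge ⟪v, g⟫ (-r) with h2 | h2
    · -- inner < -r : αstar = (⟪v,g⟫ + r)/‖v‖²
      have ha : (⟪v, g⟫ + r) / ‖v‖ ^ 2 = αstar := by
        apply huniq
        intro α
        rw [phi_eq, phi_eq]
        exact key_neg _ _ _ _ _ _ hn hr (div_mul_cancel₀ _ hne)
          (le_of_lt (div_neg_of_neg_of_pos (by linarith) hn))
      have hs : αstar < 0 := by rw [← ha]; exact div_neg_of_neg_of_pos (by linarith) hn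
      rw [abs_of_neg hs, ← ha, abs_of_neg (by linarith : ⟪v, g⟫ < 0), ← neg_div,
        lt_div_iff₀ hn]
      constructor <;> intro <;> nlinarith
    · -- |inner| ≤ r : αstar = 0
      have habs : |⟪v, g⟫| ≤ r := abs_le.mpr ⟨by linarith, h1⟩
      have ha : (0:ℝ) = αstar := by
        apply huniq
        intro α
        rw [phi_eq, phi_eq]
        exact key_zero _ _ _ _ _ hn habs
      rw [← ha]
      simp only [abs_zero]
      constructor
      · intro h; linarith
      · intro h
        nlinarith [mul_nonneg hc hn.le]
end

section
/- Let S be a set and let f : S → ℝ be a nonnegative function. Let 0 = t₀ < t₁ < ⋯ < t_m be real numbers, set δᵢ = tᵢ − t_{i−1}, and choose τᵢ ∈ [t_{i−1}, tᵢ] for i = 1, …, m. Define f₁(x) = Σ_{i=1}^m δᵢ · 1_{{f ≥ τᵢ}}(x) (where 1_{{f ≥ τ}} is the indicator of the set {x : f(x) ≥ τ}) and f₂(x) = max{0, f(x) − t_m}. Then for every x ∈ S, |f(x) − f₁(x) − f₂(x)| ≤ max_{1 ≤ i ≤ m} δᵢ; in particular the supremum norm satisfies ‖f − f₁ − f₂‖_∞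 ≤ max_{1 ≤ i ≤ m} δᵢ. -/
open Finset

/-- Layer-cake step-function approximation: for a nonnegative `f : S → ℝ`, a partition
`0 = t₀ < t₁ < ⋯ < t_m` with `δᵢ = tᵢ − t_{i−1}`, sample points `τᵢ ∈ [t_{i−1}, tᵢ]`,
`f₁ = Σᵢ δᵢ · 1_{{f ≥ τᵢ}}` and `f₂ = max(0, f − t_m)`, one has
`|f x − f₁ x − f₂ x| ≤ maxᵢ δᵢ` for all `x`, and hence `‖f − f₁ − f₂‖_∞ ≤ maxᵢ δᵢ`. -/
theorem stmt8 {S : Type*} (f : S → ℝ) (hf : ∀ x, 0 ≤ f x)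
    (m : ℕ) (hm : 1 ≤ m) (t : ℕ → ℝ) (ht0 : t 0 = 0)
    (hmono : ∀ i, i < m → t i < t (i + 1))
    (τ : ℕ → ℝ) (hτ : ∀ i, 1 ≤ i → i ≤ m → τ i ∈ Set.Icc (t (i - 1)) (t i)) :
    (∀ x : S,
      |f x - (∑ i ∈ Finset.Icc 1 m,
          (t i - t (i - 1)) * Set.indicator {y | τ i ≤ f y} (fun _ => (1 : ℝ)) x) -
        max 0 (f x - t m)| ≤
      (Finset.Icc 1 m).sup' (Finset.nonempty_Icc.mpr hm) (fun i => t i - t (i - 1))) ∧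
    (⨆ x : S,
      |f x - (∑ i ∈ Finset.Icc 1 m,
          (t i - t (i - 1)) * Set.indicator {y | τ i ≤ f y} (fun _ => (1 : ℝ)) x) -
        max 0 (f x - t m)|) ≤
      (Finset.Icc 1 m).sup' (Finset.nonempty_Icc.mpr hm) (fun i => t i - t (i - 1)) := by
  set M := (Finset.Icc 1 m).sup' (Finset.nonempty_Icc.mpr hm) (fun i => t i - t (i - 1)) with hM
  -- monotonicity of t on [0, m]
  have hmono' : ∀ i j, i ≤ j → j ≤ m → t i ≤ t j := by
    intro i j hij hjm
    induction j with
    | zero => have : i = 0 := by omega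
              simp [this]
    | succ n ih =>
      rcases Nat.lt_or_ge i (n+1) with h | h
      · exact le_trans (ih (by omega) (by omega)) (le_of_lt (hmono n (by omega)))
      · have : i = n + 1 := by omega
        simp [this]
  have hMδ : ∀ i, 1 ≤ i → i ≤ m → t i - t (i - 1) ≤ M := by
    intro i h1 h2
    exact Finset.le_sup' (fun i => t i - t (i - 1)) (Finset.mem_Icc.mpr ⟨h1, h2⟩)
  have hM0 : 0 ≤ M := by
    have h1 : t 0 < t 1 := hmono 0 hm
    have := hMδ 1 le_rfl hm
    simp only [Nat.sub_self] at this ⊢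
    linarith
  -- telescoping sum
  have tel : ∀ k : ℕ, (∑ i ∈ Finset.Icc 1 k, (t i - t (i - 1))) = t k - t 0 := by
    intro k
    induction k with
    | zero => simp
    | succ n ih =>
      rw [Finset.sum_Icc_succ_top (by omega), ih]
      simp
  have key : ∀ x : S,
      |f x - (∑ i ∈ Finset.Icc 1 m,
          (t i - t (i - 1)) * Set.indicator {y | τ i ≤ f y} (fun _ => (1 : ℝ)) x) -
        max 0 (f x - t m)| ≤ M := by
    intro x
    by_cases hx : t m ≤ f x
    · -- all indicators equal 1
      have hsum : (∑ i ∈ Finset.Icc 1 m,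
          (t i - t (i - 1)) * Set.indicator {y | τ i ≤ f y} (fun _ => (1 : ℝ)) x)
          = ∑ i ∈ Finset.Icc 1 m, (t i - t (i - 1)) := by
        apply Finset.sum_congr rfl
        intro i hi
        rw [Finset.mem_Icc] at hi
        have hτi : τ i ≤ f x :=
          le_trans (hτ i hi.1 hi.2).2 (le_trans (hmono' i m hi.2 le_rfl) hx)
        rw [Set.indicator_of_mem (by exact hτi)]
        ring
      rw [hsum, tel, ht0, max_eq_right (by linarith)]
      simpa using hM0
    · push_neg at hx
      -- find the first k with f x < t k
      have hex : ∃ k, f x < t k := ⟨m, hx⟩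
      set k := Nat.find hex with hk
      have hks : f x < t k := Nat.find_spec hex
      have hk1 : 1 ≤ k := by
        rcases Nat.eq_zero_or_pos k with h | h
        · exfalso; have := hks; rw [h, ht0] at this; exact absurd this (not_lt.mpr (hf x))
        · exact h
      have hkm : k ≤ m := Nat.find_min' hex hx
      have hklow : t (k - 1) ≤ f x := by
        have := Nat.find_min hex (show k - 1 < k by omega)
        push_neg at this
        exact this
      have hmax : max 0 (f x - t m) = 0 := max_eq_left (by linarith)
      -- split the sum
      have hzero : ∀ i ∈ Finset.Ioc k m,
          (t i - t (i - 1)) * Set.indicator {y | τ i ≤ f y} (fun _ => (1 : ℝ)) x = 0 := by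
        intro i hi
        rw [Finset.mem_Ioc] at hi
        have : f x < τ i := by
          have h1 : t k ≤ t (i - 1) := hmono' k (i - 1) (by omega) (by omega)
          have h2 : t (i - 1) ≤ τ i := (hτ i (by omega) hi.2).1
          linarith
        rw [Set.indicator_of_notMem (by simpa using not_le.mpr this), mul_zero]
      have hone : ∀ i ∈ Finset.Icc 1 (k - 1),
          (t i - t (i - 1)) * Set.indicator {y | τ i ≤ f y} (fun _ => (1 : ℝ)) x
          = t i - t (i - 1) := by
        intro i hi
        rw [Finset.mem_Icc] at hi
        have hτi : τ i ≤ f x :=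
          le_trans (hτ i hi.1 (by omega)).2 (le_trans (hmono' i (k - 1) hi.2 (by omega)) hklow)
        rw [Set.indicator_of_mem (by exact hτi)]
        ring
      have hsplit : (∑ i ∈ Finset.Icc 1 m,
          (t i - t (i - 1)) * Set.indicator {y | τ i ≤ f y} (fun _ => (1 : ℝ)) x)
          = t (k - 1) +
            (t k - t (k - 1)) * Set.indicator {y | τ k ≤ f y} (fun _ => (1 : ℝ)) x := by
        have h1 : Finset.Icc 1 m = Finset.Icc 1 k ∪ Finset.Ioc k m := by
          rw [← Finset.Icc_add_one_left_eq_Ioc k m]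
          ext j
          simp [Finset.mem_Icc, Finset.mem_union]
          omega
        rw [h1, Finset.sum_union (by
          rw [Finset.disjoint_left]
          intro a ha hb
          rw [Finset.mem_Icc] at ha
          rw [Finset.mem_Ioc] at hb
          omega)]
        rw [Finset.sum_eq_zero hzero, add_zero]
        have h2 : Finset.Icc 1 k = Finset.Icc 1 (k - 1) ∪ {k} := by
          ext j
          simp [Finset.mem_Icc]
          omega
        rw [h2, Finset.sum_union (by
          rw [Finset.disjoint_left]
          intro a ha hb
          rw [Finset.mem_Icc] at ha
          simp at hb
          omega)]
        rw [Finset.sum_congr rfl hone, tel, ht0, Finset.sum_singleton]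
        ring
      rw [hsplit, hmax]
      have hδk : t k - t (k - 1) ≤ M := hMδ k hk1 hkm
      by_cases hτk : τ k ≤ f x
      · rw [Set.indicator_of_mem (by exact hτk)]
        rw [abs_le]
        constructor <;> [nlinarith; nlinarith]
      · rw [Set.indicator_of_notMem (by simpa using not_le.mpr (not_le.mp hτk))]
        have hτklow : t (k - 1) ≤ τ k := (hτ k hk1 hkm).1
        have hτkhigh : τ k ≤ t k := (hτ k hk1 hkm).2
        push_neg at hτk
        rw [abs_le]
        constructor <;> nlinarith
  refine ⟨key, Real.iSup_le key hM0⟩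
end
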